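/- arXiv:1006.4400 — 2 statements merged into one kernel-verified Lean document; each statement's English description precedes it below -/
import Mathlib

section
/- Suppose δ > 1 and sup_{k≥1} c_k < ∞. Then percolation does not occur in G_N: the probability that 0 belongs to an infinite cluster is 0 (equivalently, almost surely every connected component of G_N is finite). -/
open MeasureTheory ProbabilityTheory Filter

/-- The hierarchical group of order `N`: sequences with values in `{0, ..., N-1}`
(encoded as `ZMod N`), all but finitely many entries zero, with componentwise
addition mod `N`. -/
abbrev HierGroup (N : ℕ) := ℕ →₀ ZMod N

/-- The hierarchical distance: `0` if `x = y`, and otherwise the largest index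
(counted starting from `1`) where `x` and `y` differ. -/
noncomputable def hdist {N : ℕ} (x y : HierGroup N) : ℕ :=
  (x - y).support.sup fun i => i + 1

lemma hdist_comm {N : ℕ} (x y : HierGroup N) : hdist x y = hdist y x := by
  unfold hdist
  rw [← neg_sub y x, Finsupp.support_neg]

/-- The random graph determined by an edge configuration `ω`:
`x` and `y` are adjacent iff they are distinct and the edge `s(x,y)` is open. -/
def graphOf {V : Type*} {Ω : Type*} (E : Sym2 V → Ω → Bool) (ω : Ω) : SimpleGraph V where
  Adj x y := x ≠ y ∧ E s(x, y) ω = true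
  symm := by
    constructor
    intro x y h
    refine ⟨h.1.symm, ?_⟩
    rw [Sym2.eq_swap]
    exact h.2
  loopless := ⟨fun x h => h.1 rfl⟩

/-- `x` lies in an infinite cluster (connected component) of `G`. -/
def InInfiniteCluster {V : Type*} (G : SimpleGraph V) (x : V) : Prop :=
  {y | G.Reachable x y}.Infinite

/-- `G` has exactly one infinite connected component. -/
def UniqueInfiniteCluster {V : Type*} (G : SimpleGraph V) : Prop :=
  ∃! S : Set V, (∃ x, S = {y | G.Reachable x y}) ∧ S.Infinite

/-- The edge probabilities of the hierarchical random graph `G_N`: two distinct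
points at hierarchical distance `k` are joined with probability
`min (c k / N ^ (k * (1 + δ))) 1`. -/
def EdgeProbOK (N : ℕ) (δ : ℝ) (c : ℕ → ℝ) {Ω : Type*} [MeasurableSpace Ω]
    (μ : Measure Ω) (E : Sym2 (HierGroup N) → Ω → Bool) : Prop :=
  ∀ x y : HierGroup N, x ≠ y →
    μ {ω | E s(x, y) ω = true} =
      ENNReal.ofReal (min (c (hdist x y) / (N : ℝ) ^ ((hdist x y : ℝ) * (1 + δ))) 1)

/-- The `k`-ball containing `0` in the hierarchical group. -/
def hball (N : ℕ) (k : ℕ) : Set (HierGroup N) := {y | hdist 0 y ≤ k}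

/-- The `(j, l]`-annulus around `0` in the hierarchical group. -/
def hannulus (N : ℕ) (j l : ℕ) : Set (HierGroup N) :=
  {y | j < hdist 0 y ∧ hdist 0 y ≤ l}

/-- The restriction of a graph to a set `S` of vertices: only edges with both
endpoints in `S` are kept. -/
def restrictTo {V : Type*} (G : SimpleGraph V) (S : Set V) : SimpleGraph V where
  Adj a b := G.Adj a b ∧ a ∈ S ∧ b ∈ S
  symm := ⟨fun a b h => ⟨h.1.symm, h.2.2, h.2.1⟩⟩
  loopless := ⟨fun a h => G.loopless.irrefl a h.1⟩

/-- The cluster of `x` inside the `k`-ball `B_k` containing `0`, using only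
edges between points of `B_k`. -/
def clusterIn (N : ℕ) (G : SimpleGraph (HierGroup N)) (k : ℕ) (x : HierGroup N) :
    Set (HierGroup N) :=
  {y | (restrictTo G (hball N k)).Reachable x y}

/-- `S` is a largest cluster of the ball `B_k` containing `0` (in the graph `G`
restricted to `B_k`). -/
def IsLargestCluster (N : ℕ) (G : SimpleGraph (HierGroup N)) (k : ℕ)
    (S : Set (HierGroup N)) : Prop :=
  (∃ x ∈ hball N k, S = clusterIn N G k x) ∧
    ∀ x ∈ hball N k, (clusterIn N G k x).ncard ≤ S.ncard

/-- The hierarchical scales `k_n = ⌊K n log n⌋`. -/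
noncomputable def kseq (K : ℝ) (n : ℕ) : ℕ := ⌊K * n * Real.log n⌋₊


lemma hdist_zero_eq {N : ℕ} (y : HierGroup N) :
    hdist 0 y = y.support.sup (fun i => i + 1) := by
  unfold hdist
  rw [zero_sub, Finsupp.support_neg]

lemma mem_hball_iff {N : ℕ} {k : ℕ} {y : HierGroup N} :
    y ∈ hball N k ↔ ∀ i ∈ y.support, i + 1 ≤ k := by
  simp [hball, hdist_zero_eq, Finset.sup_le_iff]

lemma hball_finite (N k : ℕ) (hN : 2 ≤ N) : (hball N k).Finite := by
  haveI : NeZero N := ⟨by omega⟩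
  have hinj : Set.InjOn (fun (y : HierGroup N) (i : Fin k) => y i) (hball N k) := by
    intro y hy z hz h
    ext i
    by_cases hi : i < k
    · exact congrFun h ⟨i, hi⟩
    · have hy' : y i = 0 := by
        by_contra hne
        have := mem_hball_iff.mp hy i (Finsupp.mem_support_iff.mpr hne)
        omega
      have hz' : z i = 0 := by
        by_contra hne
        have := mem_hball_iff.mp hz i (Finsupp.mem_support_iff.mpr hne)
        omega
      rw [hy', hz']
  exact Set.Finite.of_finite_image (Set.toFinite _) hinj

lemma hball_ncard (N k : ℕ) (hN : 2 ≤ N) : (hball N k).ncard ≤ N ^ k := by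
  haveI : NeZero N := ⟨by omega⟩
  have hinj : Set.InjOn (fun (y : HierGroup N) (i : Fin k) => y i) (hball N k) := by
    intro y hy z hz h
    ext i
    by_cases hi : i < k
    · exact congrFun h ⟨i, hi⟩
    · have hy' : y i = 0 := by
        by_contra hne
        have := mem_hball_iff.mp hy i (Finsupp.mem_support_iff.mpr hne)
        omega
      have hz' : z i = 0 := by
        by_contra hne
        have := mem_hball_iff.mp hz i (Finsupp.mem_support_iff.mpr hne)
        omega
      rw [hy', hz']
  calc (hball N k).ncard = ((fun (y : HierGroup N) (i : Fin k) => y i) '' hball N k).ncard :=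
        (Set.ncard_image_of_injOn hinj).symm
    _ ≤ (Set.univ : Set (Fin k → ZMod N)).ncard :=
        Set.ncard_le_ncard (Set.subset_univ _) Set.finite_univ
    _ = N ^ k := by
        rw [Set.ncard_univ, Nat.card_eq_fintype_card, Fintype.card_fun, ZMod.card,
          Fintype.card_fin]

lemma hdist_lower {N : ℕ} {k : ℕ} {a b : HierGroup N} (ha : hdist 0 a ≤ k)
    (hb : k < hdist 0 b) : hdist 0 b ≤ hdist a b := by
  have hne : b.support.Nonempty := by
    by_contra h
    rw [Finset.not_nonempty_iff_eq_empty] at h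
    rw [hdist_zero_eq, h] at hb
    simp at hb
  obtain ⟨i, hi, hsup⟩ := Finset.exists_mem_eq_sup _ hne (fun i => i + 1)
  rw [hdist_zero_eq] at hb ⊢
  rw [hsup]
  have hai : a i = 0 := by
    by_contra hne'
    have := (by simpa [hball, hdist_zero_eq, Finset.sup_le_iff] using ha :
      ∀ j ∈ a.support, j + 1 ≤ k) i (Finsupp.mem_support_iff.mpr hne')
    omega
  have : i ∈ (a - b).support := by
    rw [Finsupp.mem_support_iff]
    simp only [Finsupp.sub_apply, hai, zero_sub, neg_ne_zero]
    exact Finsupp.mem_support_iff.mp hi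
  exact Finset.le_sup this

lemma exists_crossing {V : Type*} {G : SimpleGraph V} (P : V → Prop) :
    ∀ {u v : V}, G.Walk u v → P u → ¬ P v → ∃ a b, G.Adj a b ∧ P a ∧ ¬ P b := by
  intro u v w
  induction w with
  | nil => intro hu hv; exact absurd hu hv
  | @cons u x v h p ih =>
    intro hu hv
    by_cases hx : P x
    · exact ih hx hv
    · exact ⟨u, x, h, hu, hx⟩

/-- If `δ > 1` and `sup_{k ≥ 1} c_k < ∞`, percolation does not occur:
the probability that `0` belongs to an infinite cluster is `0`. -/
theorem no_percolation_of_one_lt_delta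
    (N : ℕ) (hN : 2 ≤ N) (δ : ℝ) (hδ : 1 < δ)
    (c : ℕ → ℝ) (hc0 : ∀ k : ℕ, 1 ≤ k → 0 ≤ c k)
    (hcsup : ∃ M : ℝ, ∀ k : ℕ, 1 ≤ k → c k ≤ M)
    (Ω : Type) [MeasurableSpace Ω] (μ : Measure Ω) [IsProbabilityMeasure μ]
    (E : Sym2 (HierGroup N) → Ω → Bool)
    (hE : ∀ e, Measurable (E e))
    (hind : iIndepFun E μ)
    (hprob : EdgeProbOK N δ c μ E) :
    μ {ω | InInfiniteCluster (graphOf E ω) 0} = 0 := by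

  classical
  haveI : NeZero N := ⟨by omega⟩
  obtain ⟨M, hM⟩ := hcsup
  have hM0 : 0 ≤ M := le_trans (hc0 1 le_rfl) (hM 1 le_rfl)
  set n : ℝ := (N : ℝ) with hn
  have hn1 : (1:ℝ) < n := by
    simp only [hn]
    exact_mod_cast by omega
  have hn0 : (0:ℝ) < n := lt_trans one_pos hn1
  set t : ℝ := n ^ (-δ) with htdef
  have ht0 : 0 ≤ t := Real.rpow_nonneg hn0.le _
  have ht1 : t < 1 := Real.rpow_lt_one_of_one_lt_of_neg hn1 (by linarith)
  set T : ENNReal := ENNReal.ofReal t with hTdef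
  have hT1 : T < 1 := by
    rw [hTdef]
    exact ENNReal.ofReal_lt_one.mpr ht1
  set S := {ω | InInfiniteCluster (graphOf E ω) 0} with hS
  -- key bound for each k
  have key : ∀ k : ℕ, μ S ≤
      ENNReal.ofReal (M * n ^ ((k:ℝ) - ((k:ℝ)+1)*δ)) * (1 - T)⁻¹ := by
    intro k
    set Bk : Finset (HierGroup N) := (hball_finite N k hN).toFinset with hBk
    set Sph : ℕ → Finset (HierGroup N) := fun j =>
      (hball_finite N j hN).toFinset.filter (fun b => hdist 0 b = j) with hSph
    set W : ℕ → Set Ω := fun m =>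
      ⋃ a ∈ Bk, ⋃ b ∈ Sph (k+1+m), {ω | E s(a, b) ω = true} with hW
    have hcover : S ⊆ ⋃ m, W m := by
      intro ω hω
      have h0 : (0 : HierGroup N) ∈ hball N k := by
        simp [hball, hdist, Finsupp.support_zero]
      obtain ⟨y, hy, hyout⟩ : ∃ y, (graphOf E ω).Reachable 0 y ∧ y ∉ hball N k := by
        by_contra h
        push_neg at h
        exact hω (Set.Finite.subset (hball_finite N k hN) (fun y hy => h y hy))
      obtain ⟨w⟩ := hy
      obtain ⟨a, b, hab, ha, hb⟩ := exists_crossing (· ∈ hball N k) w h0 hyout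
      have hbk : k < hdist 0 b := by
        by_contra h
        exact hb (by simpa [hball] using not_lt.mp h)
      refine Set.mem_iUnion.mpr ⟨hdist 0 b - (k+1), ?_⟩
      simp only [hW, Set.mem_iUnion]
      refine ⟨a, by simpa [hBk, Set.Finite.mem_toFinset] using ha, b, ?_, (show a ≠ b ∧ E s(a, b) ω = true from hab).2⟩
      have hj : k + 1 + (hdist 0 b - (k+1)) = hdist 0 b := by omega
      rw [hj]
      simp [hSph, Set.Finite.mem_toFinset, hball]
    have hterm : ∀ m : ℕ, ∀ a ∈ Bk, ∀ b ∈ Sph (k+1+m),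
        μ {ω | E s(a, b) ω = true} ≤ ENNReal.ofReal (M / n ^ (((k+1+m:ℕ):ℝ) * (1+δ))) := by
      intro m a haB b hbB
      have ha : hdist 0 a ≤ k := by
        simpa [hBk, Set.Finite.mem_toFinset, hball] using haB
      have hb : hdist 0 b = k+1+m := by
        simp only [hSph, Finset.mem_filter] at hbB
        exact hbB.2
      have hbk : k < hdist 0 b := by omega
      have hne : a ≠ b := by
        rintro rfl
        omega
      have hd : (k+1+m : ℕ) ≤ hdist a b := hb ▸ hdist_lower ha hbk
      rw [hprob a b hne]
      apply ENNReal.ofReal_le_ofReal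
      have hX : (0:ℝ) < n ^ ((hdist a b : ℝ) * (1+δ)) := Real.rpow_pos_of_pos hn0 _
      have hY : (0:ℝ) < n ^ (((k+1+m:ℕ):ℝ) * (1+δ)) := Real.rpow_pos_of_pos hn0 _
      calc min (c (hdist a b) / n ^ ((hdist a b : ℝ) * (1 + δ))) 1
          ≤ c (hdist a b) / n ^ ((hdist a b : ℝ) * (1 + δ)) := min_le_left _ _
        _ ≤ M / n ^ ((hdist a b : ℝ) * (1 + δ)) := by
            gcongr
            exact hM _ (by omega)
        _ ≤ M / n ^ (((k+1+m:ℕ):ℝ) * (1+δ)) := by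
            apply div_le_div_of_nonneg_left hM0 hY
            apply Real.rpow_le_rpow_of_exponent_le hn1.le
            apply mul_le_mul_of_nonneg_right ?_ (by linarith)
            exact_mod_cast hd
    have hWm : ∀ m : ℕ, μ (W m) ≤
        ENNReal.ofReal (M * n ^ ((k:ℝ) - ((k:ℝ)+1)*δ)) * T ^ m := by
      intro m
      set j : ℕ := k + 1 + m with hj
      have step1 : μ (W m) ≤ ∑ a ∈ Bk, ∑ b ∈ Sph j, μ {ω | E s(a, b) ω = true} := by
        refine le_trans (measure_biUnion_finset_le _ _) ?_
        exact Finset.sum_le_sum fun a ha => measure_biUnion_finset_le _ _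
      have step2 : (∑ a ∈ Bk, ∑ b ∈ Sph j, μ {ω | E s(a, b) ω = true}) ≤
          (Bk.card : ENNReal) * (Sph j).card * ENNReal.ofReal (M / n ^ ((j:ℝ) * (1+δ))) := by
        calc (∑ a ∈ Bk, ∑ b ∈ Sph j, μ {ω | E s(a, b) ω = true})
            ≤ ∑ a ∈ Bk, ∑ b ∈ Sph j, ENNReal.ofReal (M / n ^ ((j:ℝ) * (1+δ))) := by
              refine Finset.sum_le_sum fun a ha => Finset.sum_le_sum fun b hb => ?_
              exact hterm m a ha b hb
          _ = (Bk.card : ENNReal) * (Sph j).card * ENNReal.ofReal (M / n ^ ((j:ℝ) * (1+δ))) := by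
              simp [Finset.sum_const, mul_assoc, mul_comm, mul_left_comm]
      have hBcard : (Bk.card : ENNReal) ≤ ((N ^ k : ℕ) : ENNReal) := by
        have : Bk.card ≤ N ^ k := by
          rw [hBk, ← Set.ncard_eq_toFinset_card _ (hball_finite N k hN)]
          exact hball_ncard N k hN
        exact_mod_cast this
      have hScard : ((Sph j).card : ENNReal) ≤ ((N ^ j : ℕ) : ENNReal) := by
        have : (Sph j).card ≤ N ^ j := by
          calc (Sph j).card ≤ (hball_finite N j hN).toFinset.card :=
                Finset.card_le_card (Finset.filter_subset _ _)
            _ ≤ N ^ j := by rw [← Set.ncard_eq_toFinset_card _ (hball_finite N j hN)]; exact hball_ncard N j hN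
        exact_mod_cast this
      have step3 : (Bk.card : ENNReal) * (Sph j).card * ENNReal.ofReal (M / n ^ ((j:ℝ) * (1+δ)))
          ≤ ENNReal.ofReal ((n ^ k * n ^ j) * (M / n ^ ((j:ℝ) * (1+δ)))) := by
        have h1 : ((N ^ k : ℕ) : ENNReal) = ENNReal.ofReal (n ^ k) := by
          rw [ENNReal.ofReal_pow hn0.le]
          simp [hn]
        have h2 : ((N ^ j : ℕ) : ENNReal) = ENNReal.ofReal (n ^ j) := by
          rw [ENNReal.ofReal_pow hn0.le]
          simp [hn]
        rw [ENNReal.ofReal_mul (by positivity), ENNReal.ofReal_mul (by positivity)]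
        exact mul_le_mul' (mul_le_mul' (h1 ▸ hBcard) (h2 ▸ hScard)) le_rfl
      have halg : (n ^ k * n ^ j) * (M / n ^ ((j:ℝ) * (1+δ)))
          = (M * n ^ ((k:ℝ) - ((k:ℝ)+1)*δ)) * t ^ m := by
        have hj' : ((j:ℕ):ℝ) = (k:ℝ) + 1 + (m:ℝ) := by push_cast [hj]; ring
        rw [htdef, ← Real.rpow_natCast n k, ← Real.rpow_natCast n j,
          ← Real.rpow_natCast (n ^ (-δ)) m, ← Real.rpow_mul hn0.le,
          div_eq_mul_inv, ← Real.rpow_neg hn0.le, ← Real.rpow_add hn0,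
          mul_left_comm, ← Real.rpow_add hn0, mul_assoc, ← Real.rpow_add hn0]
        congr 1
        rw [hj']
        ring_nf
      calc μ (W m) ≤ _ := step1
        _ ≤ _ := step2
        _ ≤ ENNReal.ofReal ((n ^ k * n ^ j) * (M / n ^ ((j:ℝ) * (1+δ)))) := step3
        _ = ENNReal.ofReal ((M * n ^ ((k:ℝ) - ((k:ℝ)+1)*δ)) * t ^ m) := by rw [halg]
        _ = ENNReal.ofReal (M * n ^ ((k:ℝ) - ((k:ℝ)+1)*δ)) * T ^ m := by
            rw [ENNReal.ofReal_mul (by positivity), ENNReal.ofReal_pow ht0]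
    calc μ S ≤ μ (⋃ m, W m) := measure_mono hcover
      _ ≤ ∑' m, μ (W m) := measure_iUnion_le _
      _ ≤ ∑' m, ENNReal.ofReal (M * n ^ ((k:ℝ) - ((k:ℝ)+1)*δ)) * T ^ m :=
          ENNReal.tsum_le_tsum hWm
      _ = ENNReal.ofReal (M * n ^ ((k:ℝ) - ((k:ℝ)+1)*δ)) * ∑' m, T ^ m :=
          ENNReal.tsum_mul_left
      _ = ENNReal.ofReal (M * n ^ ((k:ℝ) - ((k:ℝ)+1)*δ)) * (1 - T)⁻¹ := by
          rw [ENNReal.tsum_geometric]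
  -- the bound tends to zero
  have hq1 : n ^ ((1:ℝ) - δ) < 1 := Real.rpow_lt_one_of_one_lt_of_neg hn1 (by linarith)
  have hq0 : 0 ≤ n ^ ((1:ℝ) - δ) := Real.rpow_nonneg hn0.le _
  have hreal : Tendsto (fun k : ℕ => M * n ^ ((k:ℝ) - ((k:ℝ)+1)*δ)) atTop (nhds 0) := by
    have heq : ∀ k : ℕ, M * n ^ ((k:ℝ) - ((k:ℝ)+1)*δ)
        = (M * n ^ (-δ)) * (n ^ ((1:ℝ) - δ)) ^ k := by
      intro k
      rw [← Real.rpow_natCast (n ^ ((1:ℝ) - δ)) k, ← Real.rpow_mul hn0.le,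
        mul_assoc, ← Real.rpow_add hn0]
      congr 2
      ring
    simp only [heq]
    have := (tendsto_pow_atTop_nhds_zero_of_lt_one hq0 hq1).const_mul (M * n ^ (-δ))
    simpa using this
  have hconst : (1 - T)⁻¹ ≠ ⊤ := by
    rw [Ne, ENNReal.inv_eq_top]
    intro h
    rw [tsub_eq_zero_iff_le] at h
    exact absurd h (not_le.mpr hT1)
  have htend : Tendsto (fun k : ℕ =>
      ENNReal.ofReal (M * n ^ ((k:ℝ) - ((k:ℝ)+1)*δ)) * (1 - T)⁻¹) atTop (nhds 0) := by
    have h1 : Tendsto (fun k : ℕ =>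
        ENNReal.ofReal (M * n ^ ((k:ℝ) - ((k:ℝ)+1)*δ))) atTop (nhds 0) := by
      have := (ENNReal.continuous_ofReal.tendsto 0).comp hreal
      rw [ENNReal.ofReal_zero] at this
      exact this
    have := ENNReal.Tendsto.mul_const h1 (Or.inr hconst)
    simpa using this
  have : μ S ≤ 0 := ge_of_tendsto' htend key
  exact le_antisymm this zero_le
end

section
/- Let δ = 1 and α > 2. There exists a constant C* > 0 such that if c_k = C_0 + C_1 log k + C_2 k^α with constants C_0, C_1, C_2 ≥ 0 satisfying max(C_0, C_1, C_2) < C*, then percolation does not occur in G_N. -/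
open MeasureTheory ProbabilityTheory Filter

open scoped ENNReal NNReal

namespace NoPercAux

open SimpleGraph Finset

lemma hdist_zero_eq {N : ℕ} (x : HierGroup N) :
    hdist 0 x = x.support.sup (fun i => i + 1) := by
  unfold hdist
  rw [zero_sub, Finsupp.support_neg]

lemma lt_hdist {N : ℕ} {x : HierGroup N} {i : ℕ} (hi : i ∈ x.support) :
    i < hdist 0 x := by
  have h2 : i + 1 ≤ x.support.sup (fun i => i + 1) :=
    Finset.le_sup (f := fun i => i + 1) hi
  rw [hdist_zero_eq]
  omega

lemma eq_zero_of_hdist_zero {N : ℕ} {x : HierGroup N} (h : hdist 0 x = 0) : x = 0 := by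
  by_contra hx
  obtain ⟨i, hi⟩ := Finsupp.support_nonempty_iff.2 hx
  have := lt_hdist hi
  omega

lemma hdist_shift {N : ℕ} (x y : HierGroup N) : hdist x y = hdist 0 (y - x) := by
  have h : x - y = 0 - (y - x) := by abel
  unfold hdist
  rw [h]

/-- The step sequence extended to `ℕ` (by `0`). -/
def Zfun {G : Type*} [AddCommGroup G] {n : ℕ} (z : Fin n → {v : G // v ≠ 0}) : ℕ → G :=
  fun i => if h : i < n then (z ⟨i, h⟩ : G) else 0

/-- Partial sums of the step sequence: the vertices of the associated walk. -/
def psum {G : Type*} [AddCommGroup G] {n : ℕ} (z : Fin n → {v : G // v ≠ 0}) (j : ℕ) : G :=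
  ∑ i ∈ Finset.range j, Zfun z i

lemma psum_zero {G : Type*} [AddCommGroup G] {n : ℕ} (z : Fin n → {v : G // v ≠ 0}) :
    psum z 0 = 0 := by simp [psum]

lemma psum_succ {G : Type*} [AddCommGroup G] {n : ℕ} (z : Fin n → {v : G // v ≠ 0})
    {j : ℕ} (h : j < n) : psum z (j + 1) = psum z j + (z ⟨j, h⟩ : G) := by
  rw [psum, Finset.sum_range_succ, Zfun, dif_pos h]
  rfl

lemma psum_sub {G : Type*} [AddCommGroup G] {n : ℕ} (z : Fin n → {v : G // v ≠ 0})
    {j : ℕ} (h : j < n) : psum z (j + 1) - psum z j = (z ⟨j, h⟩ : G) := by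
  rw [psum_succ z h]; abel

lemma psum_ne {G : Type*} [AddCommGroup G] {n : ℕ} (z : Fin n → {v : G // v ≠ 0})
    {j : ℕ} (h : j < n) : psum z j ≠ psum z (j + 1) := by
  intro hc
  apply (z ⟨j, h⟩).2
  rw [← psum_sub z h, ← hc, sub_self]

lemma getVert_injective {V' : Type*} {G : SimpleGraph V'} {u v : V'} (p : G.Walk u v) :
    p.IsPath → ∀ i j, i ≤ p.length → j ≤ p.length → p.getVert i = p.getVert j → i = j := by
  induction p with
  | nil =>
    intro _ i j hi hj _
    simp only [SimpleGraph.Walk.length_nil, Nat.le_zero] at hi hj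
    omega
  | @cons a b c hadj q ih =>
    intro hp i j hi hj heq
    rw [SimpleGraph.Walk.cons_isPath_iff] at hp
    match i, j with
    | 0, 0 => rfl
    | 0, (j+1) =>
      exfalso
      apply hp.2
      rw [SimpleGraph.Walk.mem_support_iff_exists_getVert]
      refine ⟨j, ?_, ?_⟩
      · have : (SimpleGraph.Walk.cons hadj q).getVert 0 =
            (SimpleGraph.Walk.cons hadj q).getVert (j+1) := heq
        rw [SimpleGraph.Walk.getVert_zero, SimpleGraph.Walk.getVert_cons_succ] at this
        exact this.symm
      · have := hj
        simp only [SimpleGraph.Walk.length_cons] at this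
        omega
    | (i+1), 0 =>
      exfalso
      apply hp.2
      rw [SimpleGraph.Walk.mem_support_iff_exists_getVert]
      refine ⟨i, ?_, ?_⟩
      · have : (SimpleGraph.Walk.cons hadj q).getVert (i+1) =
            (SimpleGraph.Walk.cons hadj q).getVert 0 := heq
        rw [SimpleGraph.Walk.getVert_zero, SimpleGraph.Walk.getVert_cons_succ] at this
        exact this
      · have := hi
        simp only [SimpleGraph.Walk.length_cons] at this
        omega
    | (i+1), (j+1) =>
      have hi' : i ≤ q.length := by
        have := hi; simp only [SimpleGraph.Walk.length_cons] at this; omega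
      have hj' : j ≤ q.length := by
        have := hj; simp only [SimpleGraph.Walk.length_cons] at this; omega
      have heq' : q.getVert i = q.getVert j := by
        have : (SimpleGraph.Walk.cons hadj q).getVert (i+1) =
            (SimpleGraph.Walk.cons hadj q).getVert (j+1) := heq
        rwa [SimpleGraph.Walk.getVert_cons_succ, SimpleGraph.Walk.getVert_cons_succ] at this
      have := ih hp.1 i j hi' hj' heq'
      omega

/-- From a reachability statement in the random graph, extract a self-avoiding
walk recorded by its sequence of (nonzero) increments. -/
lemma exists_increments {N : ℕ} {Ω : Type} (E : Sym2 (HierGroup N) → Ω → Bool) (ω : Ω)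
    {y : HierGroup N} (h : (graphOf E ω).Reachable 0 y) :
    ∃ (n : ℕ) (z : Fin n → {v : HierGroup N // v ≠ 0}),
      Function.Injective (fun j : Fin n => s(psum z (j : ℕ), psum z ((j : ℕ) + 1))) ∧
      psum z n = y ∧
      ∀ j : Fin n, E s(psum z (j : ℕ), psum z ((j : ℕ) + 1)) ω = true := by
  classical
  obtain ⟨w⟩ := h
  let p : SimpleGraph.Path (graphOf E ω) 0 y := w.toPath
  obtain ⟨q, hq⟩ := p
  set n := q.length with hn
  have hadj : ∀ j : ℕ, j < n → (graphOf E ω).Adj (q.getVert j) (q.getVert (j+1)) :=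
    fun j hj => q.adj_getVert_succ hj
  have hne : ∀ (j : ℕ) (hj : j < n), q.getVert (j+1) - q.getVert j ≠ 0 := by
    intro j hj
    exact sub_ne_zero.mpr ((show q.getVert j ≠ q.getVert (j+1) ∧ E s(q.getVert j, q.getVert (j+1)) ω = true from hadj j hj).1.symm)
  set z : Fin n → {v : HierGroup N // v ≠ 0} :=
    fun j => ⟨q.getVert ((j : ℕ)+1) - q.getVert (j : ℕ), hne _ j.2⟩ with hzdef
  have hps : ∀ j, j ≤ n → psum z j = q.getVert j := by
    intro j
    induction j with
    | zero => intro _; rw [psum_zero, q.getVert_zero]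
    | succ j ihj =>
      intro hj
      have hj' : j < n := by omega
      rw [psum_succ _ hj', ihj (le_of_lt hj')]
      show q.getVert j + (q.getVert (j+1) - q.getVert j) = q.getVert (j+1)
      abel
  refine ⟨n, z, ?_, ?_, ?_⟩
  · -- injectivity
    intro a b heq
    simp only at heq
    rw [hps _ (le_of_lt a.2), hps _ a.2, hps _ (le_of_lt b.2), hps _ b.2] at heq
    rw [Sym2.eq_iff] at heq
    have gi := getVert_injective q hq
    rcases heq with ⟨h1, _⟩ | ⟨h1, h2⟩
    · exact Fin.ext (gi _ _ (le_of_lt a.2) (le_of_lt b.2) h1)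
    · have e1 := gi _ _ (le_of_lt a.2) b.2 h1
      have e2 := gi _ _ a.2 (le_of_lt b.2) h2
      omega
  · rw [hps n le_rfl, hn, q.getVert_length]
  · intro j
    rw [hps _ (le_of_lt j.2), hps _ j.2]
    exact (show q.getVert (j:ℕ) ≠ q.getVert ((j:ℕ)+1) ∧ E s(q.getVert (j:ℕ), q.getVert ((j:ℕ)+1)) ω = true from hadj j j.2).2

end NoPercAux

set_option maxHeartbeats 3200000 in
/-- Critical case `δ = 1`, `α > 2`: there exists `C* > 0` such that if
`c_k = C₀ + C₁ log k + C₂ k^α` with `max (C₀, C₁, C₂) < C*`, percolation does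
not occur. -/
theorem critical_no_percolation_of_small_constants
    (N : ℕ) (hN : 2 ≤ N) (α : ℝ) (hα : 2 < α) :
    ∃ Cstar : ℝ, 0 < Cstar ∧
      ∀ C0 C1 C2 : ℝ, 0 ≤ C0 → 0 ≤ C1 → 0 ≤ C2 → max (max C0 C1) C2 < Cstar →
      ∀ (Ω : Type) [MeasurableSpace Ω] (μ : Measure Ω) [IsProbabilityMeasure μ]
        (E : Sym2 (HierGroup N) → Ω → Bool),
        (∀ e, Measurable (E e)) →
        iIndepFun E μ →
        EdgeProbOK N 1 (fun k => C0 + C1 * Real.log k + C2 * (k : ℝ) ^ α) μ E →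
        μ {ω | InInfiniteCluster (graphOf E ω) 0} = 0 := by
  classical
  have hNR : (2:ℝ) ≤ (N:ℝ) := by exact_mod_cast hN
  have hN0 : (0:ℝ) < (N:ℝ) := by linarith
  set d : ℕ := ⌈α⌉₊ with hd
  have hαd : α ≤ (d:ℝ) := Nat.le_ceil α
  have hd1 : 1 ≤ d := by
    have h0 : 0 < d := Nat.ceil_pos.mpr (by linarith)
    omega
  have hsum : Summable (fun k : ℕ => 3 * (k:ℝ)^d * (1/2:ℝ)^k) := by
    have h := summable_pow_mul_geometric_of_norm_lt_one (R := ℝ) d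
      (r := (1/2:ℝ)) (by
        rw [Real.norm_eq_abs, abs_of_nonneg (by norm_num : (0:ℝ) ≤ 1/2)]; norm_num)
    simpa [mul_assoc] using h.mul_left 3
  set Sr : ℝ := ∑' k : ℕ, 3 * (k:ℝ)^d * (1/2:ℝ)^k with hSrdef
  have hSr0 : 0 ≤ Sr := tsum_nonneg (fun k => by positivity)
  refine ⟨1 / (2*(Sr+1)), by positivity, ?_⟩
  set Cs : ℝ := 1 / (2*(Sr+1)) with hCs
  have hCspos : 0 < Cs := by positivity
  intro C0 C1 C2 hC0 hC1 hC2 hCmax Ω _ μ _ E hmeas hind hprob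
  have hC0' : C0 ≤ Cs :=
    le_of_lt (lt_of_le_of_lt ((le_max_left C0 C1).trans (le_max_left _ C2)) hCmax)
  have hC1' : C1 ≤ Cs :=
    le_of_lt (lt_of_le_of_lt ((le_max_right C0 C1).trans (le_max_left _ C2)) hCmax)
  have hC2' : C2 ≤ Cs := le_of_lt (lt_of_le_of_lt (le_max_right _ C2) hCmax)
  haveI : Fact (1 < N) := ⟨hN⟩
  haveI : NeZero N := ⟨by omega⟩
  set V0 := {v : HierGroup N // v ≠ 0} with hV0
  haveI hinfV0 : Infinite V0 :=
    ((Set.finite_singleton (0 : HierGroup N)).infinite_compl).to_subtype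
  haveI := (nonempty_denumerable V0).some
  set e : ℕ ≃ V0 := (Denumerable.eqv V0).symm with he
  set c : ℕ → ℝ := fun k => C0 + C1 * Real.log k + C2 * (k:ℝ)^α with hc
  set f : ℕ → ℝ≥0∞ :=
    fun k => ENNReal.ofReal (min (c k / (N:ℝ) ^ ((k:ℝ) * (1+1))) 1) with hf
  set SS : Sym2 (HierGroup N) → Set Ω := fun s => {ω | E s ω = true} with hSS
  have hedge : ∀ x y : HierGroup N, x ≠ y → μ (SS s(x,y)) = f (hdist x y) :=
    fun x y hxy => hprob x y hxy
  have hck0 : ∀ k : ℕ, 1 ≤ k → 0 ≤ c k := by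
    intro k hk
    have hk1 : (1:ℝ) ≤ (k:ℝ) := by exact_mod_cast hk
    have := Real.log_nonneg hk1
    have : 0 ≤ C2 * (k:ℝ)^α := mul_nonneg hC2 (Real.rpow_nonneg (by linarith) α)
    simp only [hc]
    nlinarith [mul_nonneg hC1 (Real.log_nonneg hk1)]
  -- independence: product formula over finite sets of edges
  have hprodt : ∀ t : Finset (Sym2 (HierGroup N)),
      μ (⋂ s ∈ t, SS s) = ∏ s ∈ t, μ (SS s) := by
    intro t
    have hSSeq : ∀ s, SS s = E s ⁻¹' {true} := by
      intro s; ext ω; simp [hSS]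
    have h := (iIndepFun_iff_measure_inter_preimage_eq_mul.mp hind) t
      (sets := fun _ => ({true} : Set Bool)) (fun i _ => measurableSet_singleton true)
    simp only [hSSeq]
    exact h
  -- product formula along an edge-injective step sequence
  have hpath : ∀ (n : ℕ) (z : Fin n → V0),
      Function.Injective
        (fun j : Fin n => s(NoPercAux.psum z (j:ℕ), NoPercAux.psum z ((j:ℕ)+1))) →
      μ (⋂ j : Fin n, SS s(NoPercAux.psum z (j:ℕ), NoPercAux.psum z ((j:ℕ)+1))) =
        ∏ j : Fin n, f (hdist 0 ((z j : HierGroup N))) := by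
    intro n z hinj
    set ed : Fin n → Sym2 (HierGroup N) :=
      fun j => s(NoPercAux.psum z (j:ℕ), NoPercAux.psum z ((j:ℕ)+1)) with hed
    have h1 : (⋂ j : Fin n, SS (ed j)) = ⋂ s ∈ Finset.image ed Finset.univ, SS s := by
      ext ω
      simp only [Set.mem_iInter, Finset.mem_image, Finset.mem_univ, true_and]
      constructor
      · rintro h s ⟨j, rfl⟩; exact h j
      · intro h j; exact h _ ⟨j, rfl⟩
    rw [h1, hprodt (Finset.image ed Finset.univ),
      Finset.prod_image (fun a _ b _ hab => hinj hab)]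
    apply Finset.prod_congr rfl
    intro j _
    have hne : NoPercAux.psum z (j:ℕ) ≠ NoPercAux.psum z ((j:ℕ)+1) :=
      NoPercAux.psum_ne z j.2
    rw [hed]
    simp only
    rw [hedge _ _ hne, NoPercAux.hdist_shift, NoPercAux.psum_sub z j.2]
  set m : ℝ≥0∞ := ∑' v : V0, f (hdist 0 (v : HierGroup N)) with hm
  -- sum over all step sequences of given length
  have hWsum : ∀ n : ℕ,
      (∑' z : Fin n → V0, ∏ j : Fin n, f (hdist 0 ((z j : HierGroup N)))) = m ^ n := by
    intro n
    induction n with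
    | zero =>
      rw [pow_zero]
      rw [tsum_eq_single (default : Fin 0 → V0)
        (fun b hb => absurd (Subsingleton.elim b default) hb)]
      simp
    | succ n ih =>
      rw [← (Fin.consEquiv (fun _ : Fin (n+1) => V0)).tsum_eq, ENNReal.tsum_prod']
      have hsplit : ∀ (a : V0) (zz : Fin n → V0),
          (∏ j : Fin (n+1),
            f (hdist 0 (((Fin.consEquiv (fun _ : Fin (n+1) => V0)) (a, zz) j : V0) : HierGroup N))) =
          f (hdist 0 (a : HierGroup N)) * ∏ j : Fin n, f (hdist 0 ((zz j : HierGroup N))) := by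
        intro a zz
        have hcc : (Fin.consEquiv (fun _ : Fin (n+1) => V0)) (a, zz) = Fin.cons a zz := rfl
        rw [hcc, Fin.prod_univ_succ]
        simp
      calc (∑' (a : V0) (zz : Fin n → V0), ∏ j : Fin (n+1),
              f (hdist 0 (((Fin.consEquiv (fun _ : Fin (n+1) => V0)) (a, zz) j : V0) : HierGroup N)))
          = ∑' (a : V0), f (hdist 0 (a : HierGroup N)) *
              ∑' (zz : Fin n → V0), ∏ j : Fin n, f (hdist 0 ((zz j : HierGroup N))) := by
            apply tsum_congr; intro a
            rw [← ENNReal.tsum_mul_left]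
            exact tsum_congr (fun zz => hsplit a zz)
        _ = m ^ (n+1) := by
            rw [ih, ENNReal.tsum_mul_right, ← hm, pow_succ, mul_comm]
  -- per-target-point bound on the reachability probability
  have hreach : ∀ y : V0, μ {ω | (graphOf E ω).Reachable 0 (y : HierGroup N)} ≤
      ∑' (n : ℕ) (z : Fin n → V0),
        (if NoPercAux.psum z n = (y : HierGroup N)
          then ∏ j : Fin n, f (hdist 0 ((z j : HierGroup N))) else 0) := by
    intro y
    set A : (n : ℕ) → (Fin n → V0) → Set Ω := fun n z =>
      if (Function.Injective
            (fun j : Fin n => s(NoPercAux.psum z (j:ℕ), NoPercAux.psum z ((j:ℕ)+1))) ∧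
          NoPercAux.psum z n = (y : HierGroup N))
      then ⋂ j : Fin n, SS s(NoPercAux.psum z (j:ℕ), NoPercAux.psum z ((j:ℕ)+1))
      else ∅ with hA
    have hcover : {ω | (graphOf E ω).Reachable 0 (y : HierGroup N)} ⊆
        ⋃ (n : ℕ) (z : Fin n → V0), A n z := by
      intro ω hω
      obtain ⟨n, z, hinj, hend, hopen⟩ := NoPercAux.exists_increments E ω hω
      refine Set.mem_iUnion.2 ⟨n, Set.mem_iUnion.2 ⟨z, ?_⟩⟩
      rw [hA]
      simp only
      rw [if_pos ⟨hinj, hend⟩]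
      exact Set.mem_iInter.2 fun j => hopen j
    calc μ {ω | (graphOf E ω).Reachable 0 (y : HierGroup N)}
        ≤ μ (⋃ (n : ℕ) (z : Fin n → V0), A n z) := measure_mono hcover
      _ ≤ ∑' n : ℕ, μ (⋃ z : Fin n → V0, A n z) := measure_iUnion_le _
      _ ≤ ∑' (n : ℕ) (z : Fin n → V0), μ (A n z) :=
          ENNReal.tsum_le_tsum (fun n => measure_iUnion_le _)
      _ ≤ ∑' (n : ℕ) (z : Fin n → V0),
            (if NoPercAux.psum z n = (y : HierGroup N)
              then ∏ j : Fin n, f (hdist 0 ((z j : HierGroup N))) else 0) := by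
          refine ENNReal.tsum_le_tsum (fun n => ENNReal.tsum_le_tsum (fun z => ?_))
          rw [hA]
          simp only
          split_ifs with h1 h2
          · exact le_of_eq (hpath n z h1.1)
          · exact absurd h1.2 h2
          · simp
          · simp
  -- total reachability sum is finite
  have htot : (∑' y : V0, μ {ω | (graphOf E ω).Reachable 0 (y : HierGroup N)}) ≤
      ∑' n : ℕ, m ^ n := by
    have hY : ∀ (n : ℕ) (z : Fin n → V0),
        (∑' y : V0, (if NoPercAux.psum z n = (y : HierGroup N)
          then ∏ j : Fin n, f (hdist 0 ((z j : HierGroup N))) else 0)) ≤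
        ∏ j : Fin n, f (hdist 0 ((z j : HierGroup N))) := by
      intro n z
      by_cases hex : ∃ y0 : V0, (y0 : HierGroup N) = NoPercAux.psum z n
      · obtain ⟨y0, hy0⟩ := hex
        rw [tsum_eq_single y0 ?_]
        · split_ifs
          · exact le_rfl
          · exact zero_le
        · intro b hb
          rw [if_neg]
          intro hc
          exact hb (Subtype.coe_injective
            (show (b : HierGroup N) = (y0 : HierGroup N) by rw [hy0]; exact hc.symm))
      · have hzero : ∀ y : V0, (if NoPercAux.psum z n = (y : HierGroup N)
            then ∏ j : Fin n, f (hdist 0 ((z j : HierGroup N))) else 0) = 0 :=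
          fun y => if_neg (fun hc => hex ⟨y, hc.symm⟩)
        rw [tsum_congr hzero]
        simp
    calc (∑' y : V0, μ {ω | (graphOf E ω).Reachable 0 (y : HierGroup N)})
      ≤ ∑' (y : V0) (n : ℕ) (z : Fin n → V0),
          (if NoPercAux.psum z n = (y : HierGroup N)
            then ∏ j : Fin n, f (hdist 0 ((z j : HierGroup N))) else 0) :=
        ENNReal.tsum_le_tsum hreach
      _ = ∑' (n : ℕ) (y : V0) (z : Fin n → V0),
            (if NoPercAux.psum z n = (y : HierGroup N)
              then ∏ j : Fin n, f (hdist 0 ((z j : HierGroup N))) else 0) :=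
          ENNReal.tsum_comm
      _ = ∑' (n : ℕ) (z : Fin n → V0) (y : V0),
            (if NoPercAux.psum z n = (y : HierGroup N)
              then ∏ j : Fin n, f (hdist 0 ((z j : HierGroup N))) else 0) :=
          tsum_congr (fun n => ENNReal.tsum_comm)
      _ ≤ ∑' (n : ℕ) (z : Fin n → V0), ∏ j : Fin n, f (hdist 0 ((z j : HierGroup N))) :=
          ENNReal.tsum_le_tsum (fun n => ENNReal.tsum_le_tsum (fun z => hY n z))
      _ = ∑' n : ℕ, m ^ n := tsum_congr hWsum
  -- bound on m
  have hm12 : m ≤ ENNReal.ofReal (1/2) := by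
    have h1 : m = ∑' (k : ℕ) (_ : {v : V0 // hdist 0 (v : HierGroup N) = k}), f k := by
      rw [hm, ← (Equiv.sigmaFiberEquiv (fun v : V0 => hdist 0 (v : HierGroup N))).tsum_eq,
        ENNReal.tsum_sigma']
      refine tsum_congr (fun k => tsum_congr (fun v => ?_))
      have : (Equiv.sigmaFiberEquiv (fun v : V0 => hdist 0 (v : HierGroup N))) ⟨k, v⟩ =
          (v : V0) := rfl
      rw [this, v.2]
    have hterm : ∀ k : ℕ,
        (∑' _ : {v : V0 // hdist 0 (v : HierGroup N) = k}, f k) ≤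
          ENNReal.ofReal (Cs * (3 * (k:ℝ)^d * (1/2:ℝ)^k)) := by
      intro k
      rcases Nat.eq_zero_or_pos k with hk0 | hkpos
      · subst hk0
        haveI : IsEmpty {v : V0 // hdist 0 (v : HierGroup N) = 0} :=
          ⟨fun v => v.1.2 (NoPercAux.eq_zero_of_hdist_zero v.2)⟩
        rw [tsum_empty]
        exact zero_le
      · -- injection into functions on `Fin k`
        set ι : {v : V0 // hdist 0 (v : HierGroup N) = k} → (Fin k → ZMod N) :=
          fun v => fun i => ((v : V0) : HierGroup N) (i : ℕ) with hι
        have hιinj : Function.Injective ι := by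
          intro u v huv
          apply Subtype.ext
          apply Subtype.ext
          ext i
          by_cases hik : i < k
          · exact congrFun huv ⟨i, hik⟩
          · have h0 : ∀ w : {v : V0 // hdist 0 (v : HierGroup N) = k},
                ((w : V0) : HierGroup N) i = 0 := by
              intro w
              by_contra hw
              have hi : i ∈ ((w : V0) : HierGroup N).support :=
                Finsupp.mem_support_iff.2 hw
              have := NoPercAux.lt_hdist hi
              rw [w.2] at this
              omega
            rw [h0 u, h0 v]
        have hstep0 : (∑' _ : {v : V0 // hdist 0 (v : HierGroup N) = k}, f k) ≤
            ∑' _ : Fin k → ZMod N, f k :=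
          ENNReal.tsum_comp_le_tsum_of_injective hιinj (fun _ => f k)
        have hcard : (∑' _ : Fin k → ZMod N, f k) = ((N^k : ℕ) : ℝ≥0∞) * f k := by
          rw [tsum_fintype, Finset.sum_const, nsmul_eq_mul]
          congr 2
          rw [Finset.card_univ, Fintype.card_fun]
          simp [ZMod.card]
        have hk1 : (1:ℝ) ≤ (k:ℝ) := by exact_mod_cast hkpos
        have hkd1 : (1:ℝ) ≤ (k:ℝ)^d := one_le_pow₀ hk1
        have hrk : (N:ℝ) ^ ((k:ℝ) * (1+1)) = (N:ℝ)^k * (N:ℝ)^k := by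
          have h2k : ((k:ℝ) * (1+1)) = ((2*k : ℕ) : ℝ) := by push_cast; ring
          rw [h2k, Real.rpow_natCast, two_mul, pow_add]
        have hstep1 : ((N^k : ℕ) : ℝ≥0∞) * f k ≤
            ENNReal.ofReal ((N:ℝ)^k * (c k / ((N:ℝ)^k * (N:ℝ)^k))) := by
          rw [ENNReal.ofReal_mul (by positivity)]
          have hA : ((N^k : ℕ) : ℝ≥0∞) = ENNReal.ofReal ((N:ℝ)^k) := by
            rw [← ENNReal.ofReal_natCast]
            congr 1
            push_cast
            ring
          rw [hA]
          apply mul_le_mul_right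
          rw [hf]
          simp only
          rw [hrk]
          exact ENNReal.ofReal_le_ofReal (min_le_left _ _)
        have hstep2 : (N:ℝ)^k * (c k / ((N:ℝ)^k * (N:ℝ)^k)) = c k / (N:ℝ)^k := by
          have hNk : (N:ℝ)^k ≠ 0 := by positivity
          field_simp
        have hstep3 : c k / (N:ℝ)^k ≤ Cs * (3 * (k:ℝ)^d * (1/2:ℝ)^k) := by
          have hlogk : Real.log k ≤ (k:ℝ)^d := by
            have h1 : Real.log k ≤ (k:ℝ) - 1 := Real.log_le_sub_one_of_pos (by linarith)
            have h2 : (k:ℝ) ≤ (k:ℝ)^d := le_self_pow₀ hk1 (by omega)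
            linarith
          have hrpow : (k:ℝ)^α ≤ (k:ℝ)^d := by
            have := Real.rpow_le_rpow_of_exponent_le hk1 hαd
            rwa [Real.rpow_natCast] at this
          have hck : c k ≤ Cs * (3 * (k:ℝ)^d) := by
            have h1 : C0 ≤ Cs * (k:ℝ)^d := by nlinarith
            have h2 : C1 * Real.log k ≤ Cs * (k:ℝ)^d := by
              nlinarith [Real.log_nonneg hk1]
            have h3 : C2 * (k:ℝ)^α ≤ Cs * (k:ℝ)^d := by
              nlinarith [Real.rpow_nonneg (by linarith : (0:ℝ) ≤ (k:ℝ)) α]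
            have : c k = C0 + C1 * Real.log k + C2 * (k:ℝ)^α := rfl
            rw [this]
            linarith
          have h2k : (2:ℝ)^k ≤ (N:ℝ)^k := pow_le_pow_left₀ (by norm_num) hNR k
          have hmain : c k / (N:ℝ)^k ≤ (Cs * (3 * (k:ℝ)^d)) / (2:ℝ)^k := by
            apply div_le_div₀ (by positivity) hck (by positivity) h2k
          have heq : (Cs * (3 * (k:ℝ)^d)) / (2:ℝ)^k = Cs * (3 * (k:ℝ)^d * (1/2:ℝ)^k) := by
            have hpow : ((1:ℝ)/2)^k = 1/(2:ℝ)^k := by rw [div_pow, one_pow]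
            rw [hpow]
            ring
          rw [← heq]
          exact hmain
        calc (∑' _ : {v : V0 // hdist 0 (v : HierGroup N) = k}, f k)
            ≤ ((N^k : ℕ) : ℝ≥0∞) * f k := hstep0.trans (le_of_eq hcard)
          _ ≤ ENNReal.ofReal ((N:ℝ)^k * (c k / ((N:ℝ)^k * (N:ℝ)^k))) := hstep1
          _ = ENNReal.ofReal (c k / (N:ℝ)^k) := by rw [hstep2]
          _ ≤ ENNReal.ofReal (Cs * (3 * (k:ℝ)^d * (1/2:ℝ)^k)) :=
              ENNReal.ofReal_le_ofReal hstep3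
    have hsum2 : Summable (fun k : ℕ => Cs * (3 * (k:ℝ)^d * (1/2:ℝ)^k)) := hsum.mul_left Cs
    have h3 : (∑' k : ℕ, ENNReal.ofReal (Cs * (3 * (k:ℝ)^d * (1/2:ℝ)^k))) =
        ENNReal.ofReal (Cs * Sr) := by
      rw [← ENNReal.ofReal_tsum_of_nonneg (fun k => by positivity) hsum2]
      congr 1
      rw [hSrdef, tsum_mul_left]
    have h4 : Cs * Sr ≤ 1/2 := by
      rw [hCs, div_mul_eq_mul_div, one_mul, div_le_div_iff₀ (by positivity) (by norm_num)]
      nlinarith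
    calc m = ∑' (k : ℕ) (_ : {v : V0 // hdist 0 (v : HierGroup N) = k}), f k := h1
      _ ≤ ∑' k : ℕ, ENNReal.ofReal (Cs * (3 * (k:ℝ)^d * (1/2:ℝ)^k)) :=
          ENNReal.tsum_le_tsum hterm
      _ = ENNReal.ofReal (Cs * Sr) := h3
      _ ≤ ENNReal.ofReal (1/2) := ENNReal.ofReal_le_ofReal h4
  have hm12' : m ≤ (2⁻¹ : ℝ≥0∞) := by
    have : ENNReal.ofReal (1/2) = (2⁻¹ : ℝ≥0∞) := by
      rw [one_div, ENNReal.ofReal_inv_of_pos (by norm_num)]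
      norm_num
    rwa [this] at hm12
  -- geometric series bound
  have hgeom : (∑' n : ℕ, m ^ n) ≠ ⊤ := by
    have hle : (∑' n : ℕ, m ^ n) ≤ ∑' n : ℕ, (2⁻¹ : ℝ≥0∞) ^ n :=
      ENNReal.tsum_le_tsum (fun n => pow_le_pow_left' hm12' n)
    have h2 : (∑' n : ℕ, (2⁻¹ : ℝ≥0∞) ^ n) ≠ ⊤ := by
      rw [ENNReal.tsum_geometric, ENNReal.one_sub_inv_two]
      simp
    exact ne_top_of_le_ne_top h2 hle
  -- tail sums of the reachability probabilities tend to zero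
  set g : ℕ → ℝ≥0∞ :=
    fun i => μ {ω | (graphOf E ω).Reachable 0 ((e i : V0) : HierGroup N)} with hg
  have hgsum : (∑' i : ℕ, g i) ≠ ⊤ := by
    have heq : (∑' i : ℕ, g i) =
        ∑' y : V0, μ {ω | (graphOf E ω).Reachable 0 (y : HierGroup N)} :=
      e.tsum_eq (fun y => μ {ω | (graphOf E ω).Reachable 0 (y : HierGroup N)})
    rw [heq]
    exact ne_top_of_le_ne_top hgeom htot
  have hcov : ∀ n : ℕ, μ {ω | InInfiniteCluster (graphOf E ω) 0} ≤ ∑' i : ℕ, g (i + n) := by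
    intro n
    have hsub : {ω | InInfiniteCluster (graphOf E ω) 0} ⊆
        ⋃ i : ℕ, {ω | (graphOf E ω).Reachable 0 ((e (i + n) : V0) : HierGroup N)} := by
      intro ω hω
      have hinf : {y | (graphOf E ω).Reachable 0 y}.Infinite := hω
      have hfin : (insert (0 : HierGroup N)
          ((fun i => ((e i : V0) : HierGroup N)) '' (Set.Iio n))).Finite :=
        ((Set.finite_Iio n).image _).insert _
      obtain ⟨y, hy⟩ := (hinf.diff hfin).nonempty
      have hyr : (graphOf E ω).Reachable 0 y := hy.1
      have hyn : y ∉ insert (0 : HierGroup N)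
          ((fun i => ((e i : V0) : HierGroup N)) '' (Set.Iio n)) := hy.2
      have hy0 : y ≠ 0 := fun hcon => hyn (by rw [hcon]; exact Set.mem_insert _ _)
      set v : V0 := ⟨y, hy0⟩ with hv
      set j := e.symm v with hj
      have hjn : ¬ j < n := by
        intro hjlt
        apply hyn
        refine Set.mem_insert_iff.2 (Or.inr ⟨j, hjlt, ?_⟩)
        show ((e j : V0) : HierGroup N) = y
        rw [hj, Equiv.apply_symm_apply]
      refine Set.mem_iUnion.2 ⟨j - n, ?_⟩
      show (graphOf E ω).Reachable 0 ((e (j - n + n) : V0) : HierGroup N)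
      rw [Nat.sub_add_cancel (le_of_not_gt hjn), hj, Equiv.apply_symm_apply]
      exact hyr
    calc μ {ω | InInfiniteCluster (graphOf E ω) 0}
        ≤ μ (⋃ i : ℕ, {ω | (graphOf E ω).Reachable 0 ((e (i + n) : V0) : HierGroup N)}) :=
          measure_mono hsub
      _ ≤ ∑' i : ℕ, g (i + n) := measure_iUnion_le _
  have htend := ENNReal.tendsto_sum_nat_add g hgsum
  have hle0 : μ {ω | InInfiniteCluster (graphOf E ω) 0} ≤ 0 := ge_of_tendsto' htend hcov
  exact le_antisymm hle0 zero_le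
end
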